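/- Let A be a complex Banach algebra and let τ : A × A × A → ℂ be a continuous trilinear form which is a 3-cyclic cocycle, i.e. τ(a,b,c) = τ(b,c,a) for all a,b,c ∈ A and τ(ab,c,d) − τ(a,bc,d) + τ(a,b,cd) − τ(da,b,c) = 0 for all a,b,c,d ∈ A. If E : ℝ → A is a differentiable curve such that E(t)² = E(t) for every t ∈ ℝ, then the function t ↦ τ(E(t),E(t),E(t)) is constant on ℝ. -/

import Mathlib

set_option synthInstance.maxHeartbeats 1000000 in
set_option maxHeartbeats 2000000 in
/-- If `τ` is a continuous 3-cyclic cocycle on a complex Banach algebra `A` and `E : ℝ → A`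
is a differentiable curve of idempotents, then `t ↦ τ (E t) (E t) (E t)` is constant. -/
theorem cyclic_cocycle_constant_on_differentiable_idempotent_curve
    {A : Type*} [NormedRing A] [NormedAlgebra ℂ A] [CompleteSpace A]
    (τ : A →L[ℂ] A →L[ℂ] A →L[ℂ] ℂ)
    (hcyc : ∀ a b c : A, τ a b c = τ b c a)
    (hcocycle : ∀ a b c d : A,
      τ (a * b) c d - τ a (b * c) d + τ a b (c * d) - τ (d * a) b c = 0)
    (E : ℝ → A) (hE : Differentiable ℝ E)
    (hidem : ∀ t : ℝ, E t * E t = E t) :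
    ∀ s t : ℝ, τ (E s) (E s) (E s) = τ (E t) (E t) (E t) := by
  let S1 : (A →L[ℂ] ℂ) →L[ℝ] (A →L[ℝ] ℂ) :=
    ContinuousLinearMap.restrictScalarsL ℂ A ℂ ℝ ℝ
  let S1' : (A →L[ℂ] A →L[ℂ] ℂ) →L[ℝ] (A →L[ℝ] A →L[ℂ] ℂ) :=
    ContinuousLinearMap.restrictScalarsL ℂ A (A →L[ℂ] ℂ) ℝ ℝ
  let τR : A →L[ℝ] (A →L[ℂ] A →L[ℂ] ℂ) :=
    ContinuousLinearMap.restrictScalars (A := ℂ) (M₁ := A)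
      (M₂ := A →L[ℂ] A →L[ℂ] ℂ) ℝ τ
  let T : A →L[ℝ] (A →L[ℝ] A →L[ℂ] ℂ) := S1'.comp τR
  have key : ∀ t : ℝ, HasDerivAt (fun s => τ (E s) (E s) (E s)) 0 t := by
    intro t
    set P := E t with hP
    set Q := deriv E t with hQdef
    have hE' : HasDerivAt E Q t := (hE t).hasDerivAt
    have hTd : HasFDerivAt T T P :=
      ContinuousLinearMap.hasFDerivAt (𝕜 := ℝ) (E := A) (F := A →L[ℝ] A →L[ℂ] ℂ) (f := T)
    have h3' : HasDerivAt (fun s => τ (E s) (E s) (E s))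
        ((τ Q P + τ P Q) P + τ P P Q) t := by
      have hid : HasFDerivAt (𝕜 := ℂ) (fun x : A => x) (ContinuousLinearMap.id ℂ A) P :=
        hasFDerivAt_id P
      have hc1 : HasFDerivAt (𝕜 := ℂ) (⇑τ) τ P := ContinuousLinearMap.hasFDerivAt (𝕜 := ℂ) (E := A) (F := A →L[ℂ] A →L[ℂ] ℂ) (f := τ)
      have hc2 := hc1.clm_apply hid
      have hc3 := hc2.clm_apply hid
      have hR := (hc3.restrictScalars ℝ).comp_hasDerivAt t hE'
      refine hR.congr_deriv ?_
      change ((τ P) P ∘L ContinuousLinearMap.id ℂ A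
        + (τ P ∘L ContinuousLinearMap.id ℂ A + τ.flip P).flip P) Q = _
      simp only [ContinuousLinearMap.add_apply, ContinuousLinearMap.coe_comp', Function.comp_apply,
        ContinuousLinearMap.id_apply, ContinuousLinearMap.flip_apply]
      abel
    -- algebra
    have hPP : P * P = P := hidem t
    have hmulE : HasDerivAt (fun s => E s * E s) Q t := by
      rw [funext hidem]; exact hE'
    have hleib : Q = Q * P + P * Q := ((hE'.mul hE').unique hmulE).symm
    have e1 : P * (Q * P) * P = P * Q * P := by
      rw [← mul_assoc, mul_assoc (P * Q) P P, hPP]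
    have e2 : P * (P * Q) * P = P * Q * P := by
      rw [← mul_assoc, hPP]
    have hPQP : P * Q * P = 0 := by
      have h : P * (Q * P + P * Q) * P = P * Q * P := by rw [← hleib]
      rw [mul_add, add_mul, e1, e2] at h
      exact add_eq_right.mp h
    have c1 : τ (Q * P) P P = τ (P * Q) P P := by
      have := hcocycle Q P P P
      rw [hPP] at this
      linear_combination this
    have c2 : τ (P * Q) P P = 0 := by
      have := hcocycle P (P * Q) P P
      rw [show P * (P * Q) = P * Q by rw [← mul_assoc, hPP], hPQP, hPP] at this
      simpa using this
    have cQ : τ Q P P = 0 := by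
      have h : τ Q P P = τ (Q * P) P P + τ (P * Q) P P := by
        nth_rewrite 1 [hleib]; simp
      rw [h, c1, c2]; ring
    have hval : (τ Q P + τ P Q) P + τ P P Q = 0 := by
      simp only [ContinuousLinearMap.add_apply]
      rw [hcyc P P Q, hcyc P Q P, cQ]; ring
    rw [hval] at h3'
    exact h3'
  intro s t
  exact is_const_of_deriv_eq_zero (fun x => (key x).differentiableAt)
    (fun x => (key x).deriv) s t
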